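/- Let k ≥ 2, d ≥ 1, and let S be a training set with ‖x_i‖_∞ ≤ 1 for all i, and let (F_t, W_t, j_t) be a ShareBoost sequence for the training loss L. Suppose there exists a matrix W★ ∈ ℝ^{k×d} such that L(W★) ≤ ε for some ε > 0, all entries of W★ lie in [−c,c] for some c > 0, and W★ has exactly r nonzero columns. Then after T = ⌈4 r² c² / ε⌉ iterations, the matrix W_T satisfies L(W_T) ≤ 2ε and ‖W_T‖_{∞,0} ≤ T ≤ ⌈4 r² c² / ε⌉. -/

import Mathlib

open scoped BigOperators

noncomputable section

/-- The multiclass logistic loss for label `y`. -/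
def mcLoss (k : ℕ) (y : Fin k) (v : Fin k → ℝ) : ℝ :=
  Real.log (∑ y' : Fin k, Real.exp ((if y' ≠ y then (1 : ℝ) else 0) - v y + v y'))

/-- The average training loss of the matrix `W` (viewed as `Fin k → Fin d → ℝ`). -/
def trainLoss (k d m : ℕ) (x : Fin m → Fin d → ℝ) (y : Fin m → Fin k)
    (W : Fin k → Fin d → ℝ) : ℝ :=
  (1 / (m : ℝ)) * ∑ i : Fin m, mcLoss k (y i) (fun q => ∑ j : Fin d, W q j * x i j)

/-- The `r`-th column of the gradient matrix of `L` at `W`. -/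
def gradCol (k d : ℕ) (L : (Fin k → Fin d → ℝ) → ℝ) (W : Fin k → Fin d → ℝ)
    (r : Fin d) : Fin k → ℝ :=
  fun q => fderiv ℝ L W (fun q' j' => if q' = q ∧ j' = r then (1 : ℝ) else 0)

/-- A ShareBoost sequence for the training loss determined by the sample `(x, y)`. -/
structure ShareBoostSeq (k d m : ℕ) (x : Fin m → Fin d → ℝ) (y : Fin m → Fin k)
    (F : ℕ → Finset (Fin d)) (W : ℕ → Fin k → Fin d → ℝ) (jj : ℕ → Fin d) : Prop where
  F_zero : F 0 = ∅
  W_supp : ∀ t, ∀ i ∉ F t, ∀ q, W t q i = 0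
  W_min : ∀ t, ∀ V : Fin k → Fin d → ℝ, (∀ i ∉ F t, ∀ q, V q i = 0) →
    trainLoss k d m x y (W t) ≤ trainLoss k d m x y V
  j_max : ∀ t, ∀ r : Fin d,
    ∑ q : Fin k, |gradCol k d (trainLoss k d m x y) (W t) r q| ≤
      ∑ q : Fin k, |gradCol k d (trainLoss k d m x y) (W t) (jj t) q|
  F_succ : ∀ t, F (t + 1) = insert (jj t) (F t)

namespace SB

variable {k d m : ℕ} (x : Fin m → Fin d → ℝ) (y : Fin m → Fin k)

/-- linear-in-`U` part. -/
def B (U : Fin k → Fin d → ℝ) (i : Fin m) (y' : Fin k) : ℝ :=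
  (∑ j : Fin d, U y' j * x i j) - (∑ j : Fin d, U (y i) j * x i j)

def A (W : Fin k → Fin d → ℝ) (i : Fin m) (y' : Fin k) : ℝ :=
  (if y' ≠ y i then (1 : ℝ) else 0) + B x y W i y'

def Z (W : Fin k → Fin d → ℝ) (i : Fin m) : ℝ :=
  ∑ y' : Fin k, Real.exp (A x y W i y')

def p (W : Fin k → Fin d → ℝ) (i : Fin m) (y' : Fin k) : ℝ :=
  Real.exp (A x y W i y') / Z x y W i

def lam (W U : Fin k → Fin d → ℝ) : ℝ :=
  (1 / (m : ℝ)) * ∑ i : Fin m, ∑ y' : Fin k, p x y W i y' * B x y U i y'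

def Q (W U : Fin k → Fin d → ℝ) : ℝ :=
  (1 / (m : ℝ)) * ∑ i : Fin m,
    ((∑ y' : Fin k, p x y W i y' * (B x y U i y') ^ 2)
      - (∑ y' : Fin k, p x y W i y' * B x y U i y') ^ 2)

def Wadd (W : Fin k → Fin d → ℝ) (s : ℝ) (U : Fin k → Fin d → ℝ) : Fin k → Fin d → ℝ :=
  fun q j => W q j + s * U q j

lemma Wadd_zero (W U : Fin k → Fin d → ℝ) : Wadd W 0 U = W := by
  funext q j; simp [Wadd]

lemma trainLoss_eq (W : Fin k → Fin d → ℝ) :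
    trainLoss k d m x y W = (1 / (m : ℝ)) * ∑ i : Fin m, Real.log (Z x y W i) := by
  unfold trainLoss mcLoss Z A B
  congr 1
  refine Finset.sum_congr rfl fun i _ => ?_
  congr 1
  refine Finset.sum_congr rfl fun y' _ => ?_
  congr 1
  ring

variable {x y}

lemma Z_pos (hk : 0 < k) (W : Fin k → Fin d → ℝ) (i : Fin m) : 0 < Z x y W i := by
  have : Nonempty (Fin k) := ⟨⟨0, hk⟩⟩
  exact Finset.sum_pos (fun y' _ => Real.exp_pos _) Finset.univ_nonempty

lemma p_nonneg (hk : 0 < k) (W : Fin k → Fin d → ℝ) (i : Fin m) (y' : Fin k) :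
    0 ≤ p x y W i y' :=
  div_nonneg (Real.exp_pos _).le (Z_pos hk W i).le

lemma sum_p (hk : 0 < k) (W : Fin k → Fin d → ℝ) (i : Fin m) :
    ∑ y' : Fin k, p x y W i y' = 1 := by
  unfold p
  rw [← Finset.sum_div]
  exact div_self (Z_pos hk W i).ne'

lemma A_wadd (W U : Fin k → Fin d → ℝ) (s : ℝ) (i : Fin m) (y' : Fin k) :
    A x y (Wadd W s U) i y' = A x y W i y' + s * B x y U i y' := by
  have hs : ∀ v : Fin k, (∑ j : Fin d, Wadd W s U v j * x i j)
      = (∑ j : Fin d, W v j * x i j) + s * ∑ j : Fin d, U v j * x i j := by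
    intro v
    rw [Finset.mul_sum, ← Finset.sum_add_distrib]
    refine Finset.sum_congr rfl fun j _ => ?_
    unfold Wadd; ring
  unfold A B
  rw [hs, hs]
  ring

lemma sum_p_mul (W : Fin k → Fin d → ℝ) (i : Fin m) (f : Fin k → ℝ) :
    ∑ y' : Fin k, p x y W i y' * f y'
      = (∑ y' : Fin k, Real.exp (A x y W i y') * f y') / Z x y W i := by
  rw [Finset.sum_div]
  exact Finset.sum_congr rfl fun y' _ => by rw [p, div_mul_eq_mul_div]

lemma hasDerivAt_affine (a b s₀ : ℝ) : HasDerivAt (fun s : ℝ => a + s * b) b s₀ := by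
  simpa using ((hasDerivAt_id s₀).mul_const b).const_add a

lemma hasDerivAt_Z (W U : Fin k → Fin d → ℝ) (i : Fin m) (s₀ : ℝ) :
    HasDerivAt (fun s => Z x y (Wadd W s U) i)
      (∑ y' : Fin k, Real.exp (A x y (Wadd W s₀ U) i y') * B x y U i y') s₀ := by
  unfold Z
  simp only [A_wadd]
  exact HasDerivAt.fun_sum fun y' _ =>
    ((hasDerivAt_affine (A x y W i y') (B x y U i y') s₀).exp)

lemma hasDerivAt_N (W U : Fin k → Fin d → ℝ) (i : Fin m) (s₀ : ℝ) :
    HasDerivAt (fun s => ∑ y' : Fin k, Real.exp (A x y (Wadd W s U) i y') * B x y U i y')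
      (∑ y' : Fin k, Real.exp (A x y (Wadd W s₀ U) i y') * (B x y U i y') ^ 2) s₀ := by
  simp only [A_wadd]
  refine HasDerivAt.fun_sum fun y' _ => ?_
  have h := ((hasDerivAt_affine (A x y W i y') (B x y U i y') s₀).exp).mul_const
    (B x y U i y')
  convert h using 1
  · rfl
  ring

lemma hasDerivAt_trainLoss (hk : 0 < k) (W U : Fin k → Fin d → ℝ) (s₀ : ℝ) :
    HasDerivAt (fun s => trainLoss k d m x y (Wadd W s U))
      (lam x y (Wadd W s₀ U) U) s₀ := by
  have hfun : (fun s => trainLoss k d m x y (Wadd W s U))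
      = fun s => (1 / (m : ℝ)) * ∑ i : Fin m, Real.log (Z x y (Wadd W s U) i) :=
    funext fun s => trainLoss_eq x y _
  rw [hfun]
  have hlog : ∀ i : Fin m, HasDerivAt (fun s => Real.log (Z x y (Wadd W s U) i))
      ((∑ y' : Fin k, Real.exp (A x y (Wadd W s₀ U) i y') * B x y U i y')
        / Z x y (Wadd W s₀ U) i) s₀ :=
    fun i => (hasDerivAt_Z W U i s₀).log (Z_pos hk _ i).ne'
  have h := (HasDerivAt.fun_sum (fun i (_ : i ∈ Finset.univ) => hlog i)).const_mul (1 / (m : ℝ))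
  convert h using 1
  · rfl
  · rfl
  unfold lam
  congr 1
  exact Finset.sum_congr rfl fun i _ => sum_p_mul _ i _

lemma hasDerivAt_lam (hk : 0 < k) (W U : Fin k → Fin d → ℝ) (s₀ : ℝ) :
    HasDerivAt (fun s => lam x y (Wadd W s U) U)
      (Q x y (Wadd W s₀ U) U) s₀ := by
  have hfun : (fun s => lam x y (Wadd W s U) U)
      = fun s => (1 / (m : ℝ)) * ∑ i : Fin m,
          (∑ y' : Fin k, Real.exp (A x y (Wadd W s U) i y') * B x y U i y')
            / Z x y (Wadd W s U) i := by
    funext s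
    unfold lam
    congr 1
    exact Finset.sum_congr rfl fun i _ => sum_p_mul _ i _
  rw [hfun]
  have hdiv : ∀ i : Fin m, HasDerivAt (fun s =>
      (∑ y' : Fin k, Real.exp (A x y (Wadd W s U) i y') * B x y U i y')
        / Z x y (Wadd W s U) i)
      (((∑ y' : Fin k, Real.exp (A x y (Wadd W s₀ U) i y') * (B x y U i y') ^ 2)
          * Z x y (Wadd W s₀ U) i
        - (∑ y' : Fin k, Real.exp (A x y (Wadd W s₀ U) i y') * B x y U i y')
          * (∑ y' : Fin k, Real.exp (A x y (Wadd W s₀ U) i y') * B x y U i y'))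
        / (Z x y (Wadd W s₀ U) i) ^ 2) s₀ :=
    fun i => (hasDerivAt_N W U i s₀).div (hasDerivAt_Z W U i s₀) (Z_pos hk _ i).ne'
  have h := (HasDerivAt.fun_sum (fun i (_ : i ∈ Finset.univ) => hdiv i)).const_mul (1 / (m : ℝ))
  convert h using 1
  · rfl
  · rfl
  unfold Q
  congr 1
  refine Finset.sum_congr rfl fun i _ => ?_
  rw [sum_p_mul _ i _, sum_p_mul _ i _]
  have hZ := (Z_pos (x := x) (y := y) hk (Wadd W s₀ U) i).ne'
  field_simp

lemma Q_nonneg (hk : 0 < k) (W U : Fin k → Fin d → ℝ) : 0 ≤ Q x y W U := by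
  unfold Q
  refine mul_nonneg (by positivity) (Finset.sum_nonneg fun i _ => ?_)
  rw [sub_nonneg]
  have hcs := Finset.sum_mul_sq_le_sq_mul_sq Finset.univ
    (fun y' => Real.sqrt (p x y W i y'))
    (fun y' => Real.sqrt (p x y W i y') * B x y U i y')
  have h1 : ∀ y' : Fin k, Real.sqrt (p x y W i y') * (Real.sqrt (p x y W i y') * B x y U i y')
      = p x y W i y' * B x y U i y' := fun y' => by
    rw [← mul_assoc, Real.mul_self_sqrt (p_nonneg hk W i y')]
  have h2 : ∀ y' : Fin k, Real.sqrt (p x y W i y') ^ 2 = p x y W i y' :=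
    fun y' => Real.sq_sqrt (p_nonneg hk W i y')
  have h3 : ∀ y' : Fin k, (Real.sqrt (p x y W i y') * B x y U i y') ^ 2
      = p x y W i y' * (B x y U i y') ^ 2 := fun y' => by
    rw [mul_pow, h2]
  simp only [h1, h2, h3] at hcs
  calc (∑ y' : Fin k, p x y W i y' * B x y U i y') ^ 2
      ≤ (∑ y' : Fin k, p x y W i y') * ∑ y' : Fin k, p x y W i y' * (B x y U i y') ^ 2 := hcs
    _ = ∑ y' : Fin k, p x y W i y' * (B x y U i y') ^ 2 := by rw [sum_p hk, one_mul]

/-- Variance is invariant under shifting by a constant. -/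
lemma var_shift (pr w : Fin k → ℝ) (c : ℝ) (hp : ∑ y' : Fin k, pr y' = 1) :
    (∑ y' : Fin k, pr y' * (w y' - c) ^ 2) - (∑ y' : Fin k, pr y' * (w y' - c)) ^ 2
      = (∑ y' : Fin k, pr y' * (w y') ^ 2) - (∑ y' : Fin k, pr y' * w y') ^ 2 := by
  have e1 : (∑ y' : Fin k, pr y' * (w y' - c) ^ 2)
      = (∑ y' : Fin k, pr y' * (w y') ^ 2) - 2 * c * (∑ y' : Fin k, pr y' * w y')
        + c ^ 2 * ∑ y' : Fin k, pr y' := by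
    rw [Finset.mul_sum, Finset.mul_sum, ← Finset.sum_sub_distrib, ← Finset.sum_add_distrib]
    exact Finset.sum_congr rfl fun y' _ => by ring
  have e2 : (∑ y' : Fin k, pr y' * (w y' - c))
      = (∑ y' : Fin k, pr y' * w y') - c * ∑ y' : Fin k, pr y' := by
    rw [Finset.mul_sum, ← Finset.sum_sub_distrib]
    exact Finset.sum_congr rfl fun y' _ => by ring
  rw [e1, e2, hp]
  ring

/-- For a direction supported on a single column with entries in `[-1,1]`,
the second derivative is at most 1. -/
lemma Q_le_one (hk : 0 < k) (hx : ∀ i j, |x i j| ≤ 1)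
    (W U : Fin k → Fin d → ℝ) (j0 : Fin d)
    (hU0 : ∀ q i, i ≠ j0 → U q i = 0) (hU1 : ∀ q, |U q j0| ≤ 1) :
    Q x y W U ≤ 1 := by
  unfold Q
  have hm : (1 : ℝ) / (m : ℝ) * (m : ℝ) = (1 : ℝ) ∨ (m : ℕ) = 0 := by
    rcases Nat.eq_zero_or_pos m with h | h
    · exact Or.inr h
    · exact Or.inl (by field_simp)
  have key : ∀ i : Fin m,
      (∑ y' : Fin k, p x y W i y' * (B x y U i y') ^ 2)
        - (∑ y' : Fin k, p x y W i y' * B x y U i y') ^ 2 ≤ 1 := by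
    intro i
    set w : Fin k → ℝ := fun q => U q j0 * x i j0 with hw
    have hB : ∀ y' : Fin k, B x y U i y' = w y' - w (y i) := by
      intro y'
      unfold B
      have hsum : ∀ v : Fin k, (∑ j : Fin d, U v j * x i j) = w v := by
        intro v
        rw [hw]
        rw [Finset.sum_eq_single j0]
        · intro b _ hb; rw [hU0 v b hb, zero_mul]
        · intro h; exact absurd (Finset.mem_univ j0) h
      rw [hsum, hsum]
    simp only [hB]
    rw [var_shift _ _ _ (sum_p hk W i)]
    have h1 : (∑ y' : Fin k, p x y W i y' * (w y') ^ 2) ≤ 1 := by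
      calc (∑ y' : Fin k, p x y W i y' * (w y') ^ 2)
          ≤ ∑ y' : Fin k, p x y W i y' * 1 := by
            refine Finset.sum_le_sum fun y' _ => ?_
            refine mul_le_mul_of_nonneg_left ?_ (p_nonneg hk W i y')
            have : |w y'| ≤ 1 := by
              rw [hw]
              calc |U y' j0 * x i j0| = |U y' j0| * |x i j0| := abs_mul _ _
                _ ≤ 1 * 1 := mul_le_mul (hU1 y') (hx i j0) (abs_nonneg _) zero_le_one
                _ = 1 := one_mul 1
            calc (w y') ^ 2 = |w y'| ^ 2 := (sq_abs _).symm
              _ ≤ 1 ^ 2 := by nlinarith [abs_nonneg (w y')]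
              _ = 1 := one_pow 2
        _ = 1 := by rw [← Finset.sum_mul, sum_p hk, one_mul]
    nlinarith [sq_nonneg (∑ y' : Fin k, p x y W i y' * w y')]
  calc (1 / (m : ℝ)) * ∑ i : Fin m,
        ((∑ y' : Fin k, p x y W i y' * (B x y U i y') ^ 2)
          - (∑ y' : Fin k, p x y W i y' * B x y U i y') ^ 2)
      ≤ (1 / (m : ℝ)) * ∑ _i : Fin m, (1 : ℝ) := by
        refine mul_le_mul_of_nonneg_left (Finset.sum_le_sum fun i _ => key i) (by positivity)
    _ ≤ 1 := by
        rcases Nat.eq_zero_or_pos m with h | h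
        · subst h; simp
        · rw [Finset.sum_const, Finset.card_univ, Fintype.card_fin, nsmul_eq_mul, mul_one]
          rw [one_div, inv_mul_cancel₀ (by exact_mod_cast h.ne' : (m : ℝ) ≠ 0)]

/-- Helper: if `f` has nonnegative derivative on `[0,∞)` then `f 0 ≤ f a` for `a ≥ 0`. -/
lemma le_of_deriv_nonneg {f f' : ℝ → ℝ} (hf : ∀ s, HasDerivAt f (f' s) s)
    (h0 : ∀ s, 0 ≤ s → 0 ≤ f' s) {a : ℝ} (ha : 0 ≤ a) : f 0 ≤ f a := by
  have hdiff : Differentiable ℝ f := fun s => (hf s).differentiableAt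
  have hmono : MonotoneOn f (Set.Ici (0 : ℝ)) := by
    refine monotoneOn_of_deriv_nonneg (convex_Ici 0) hdiff.continuous.continuousOn
      (hdiff.differentiableOn) ?_
    intro s hs
    rw [interior_Ici] at hs
    rw [(hf s).deriv]
    exact h0 s (le_of_lt hs)
  exact hmono Set.self_mem_Ici ha ha

lemma lam_wadd_zero (W U V : Fin k → Fin d → ℝ) :
    lam x y (Wadd W 0 U) V = lam x y W V := by rw [Wadd_zero]

/-- Convexity inequality: first-order lower bound. -/
lemma convexity_ineq (hk : 0 < k) (W U : Fin k → Fin d → ℝ) :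
    trainLoss k d m x y W + lam x y W U ≤ trainLoss k d m x y (Wadd W 1 U) := by
  set f : ℝ → ℝ := fun s => trainLoss k d m x y (Wadd W s U) - s * lam x y W U with hf
  have hder : ∀ s, HasDerivAt f (lam x y (Wadd W s U) U - lam x y W U) s := by
    intro s
    have hm : HasDerivAt (fun s : ℝ => s * lam x y W U) (lam x y W U) s := by
      simpa using (hasDerivAt_id s).mul_const (lam x y W U)
    exact (hasDerivAt_trainLoss hk W U s).sub hm
  have hlam_mono : ∀ s, 0 ≤ s → lam x y W U ≤ lam x y (Wadd W s U) U := by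
    intro s hs
    have := le_of_deriv_nonneg (f := fun s => lam x y (Wadd W s U) U)
      (f' := fun s => Q x y (Wadd W s U) U)
      (fun s => hasDerivAt_lam hk W U s)
      (fun s _ => Q_nonneg hk _ U) hs
    rwa [lam_wadd_zero] at this
  have h01 := le_of_deriv_nonneg (f := f)
    (f' := fun s => lam x y (Wadd W s U) U - lam x y W U) hder
    (fun s hs => sub_nonneg.mpr (hlam_mono s hs)) zero_le_one
  have hf0 : f 0 = trainLoss k d m x y W := by
    simp only [hf, zero_mul, sub_zero, Wadd_zero]
  rw [hf0] at h01
  simp only [hf, one_mul] at h01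
  linarith

/-- Descent inequality for a single-column direction. -/
lemma descent_ineq (hk : 0 < k) (hx : ∀ i j, |x i j| ≤ 1)
    (W U : Fin k → Fin d → ℝ) (j0 : Fin d)
    (hU0 : ∀ q i, i ≠ j0 → U q i = 0) (hU1 : ∀ q, |U q j0| ≤ 1)
    {η : ℝ} (hη : 0 ≤ η) :
    trainLoss k d m x y (Wadd W η U)
      ≤ trainLoss k d m x y W + η * lam x y W U + η ^ 2 / 2 := by
  have hchi : ∀ s, 0 ≤ s → lam x y (Wadd W s U) U ≤ s + lam x y W U := by
    intro s hs
    have hder : ∀ s, HasDerivAt (fun s => s - lam x y (Wadd W s U) U)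
        (1 - Q x y (Wadd W s U) U) s :=
      fun s => (hasDerivAt_id s).sub (hasDerivAt_lam hk W U s)
    have h := le_of_deriv_nonneg (f := fun s => s - lam x y (Wadd W s U) U)
      (f' := fun s => 1 - Q x y (Wadd W s U) U) hder
      (fun s _ => sub_nonneg.mpr (Q_le_one hk hx _ U j0 hU0 hU1)) hs
    rw [lam_wadd_zero] at h
    linarith
  set ψ : ℝ → ℝ := fun s =>
    trainLoss k d m x y W + s * lam x y W U + s ^ 2 / 2
      - trainLoss k d m x y (Wadd W s U) with hψ
  have hsq : ∀ s : ℝ, HasDerivAt (fun s : ℝ => s ^ 2 / 2) s s := by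
    intro s
    have := (hasDerivAt_pow 2 s).div_const 2
    convert this using 1
    · rfl
    · rfl
    ring
  have hder : ∀ s, HasDerivAt ψ
      (lam x y W U + s - lam x y (Wadd W s U) U) s := by
    intro s
    have h1 := (((hasDerivAt_id s).mul_const (lam x y W U)).const_add
      (trainLoss k d m x y W)).add (hsq s)
    have h2 := h1.sub (hasDerivAt_trainLoss (x := x) (y := y) hk W U s)
    convert h2 using 1
    · rfl
    · rfl
    · rfl
    ring
  have h := le_of_deriv_nonneg (f := ψ)
    (f' := fun s => lam x y W U + s - lam x y (Wadd W s U) U) hder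
    (fun s hs => by have := hchi s hs; linarith) hη
  have hψ0 : ψ 0 = 0 := by
    norm_num [hψ, Wadd_zero]
  rw [hψ0] at h
  simp only [hψ] at h
  linarith

variable (x y) in
/-- The linear functional `U ↦ B x y U i y'` as a continuous linear map. -/
def Bclm (i : Fin m) (y' : Fin k) : (Fin k → Fin d → ℝ) →L[ℝ] ℝ :=
  LinearMap.toContinuousLinearMap
    { toFun := fun U => B x y U i y'
      map_add' := by
        intro U V
        unfold B
        simp only [Pi.add_apply, add_mul, Finset.sum_add_distrib]
        ring
      map_smul' := by
        intro c U
        unfold B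
        simp only [Pi.smul_apply, smul_eq_mul, mul_assoc, ← Finset.mul_sum,
          RingHom.id_apply]
        ring }

@[simp] lemma Bclm_apply (i : Fin m) (y' : Fin k) (U : Fin k → Fin d → ℝ) :
    Bclm x y i y' U = B x y U i y' := rfl

lemma hasFDerivAt_trainLoss (hk : 0 < k) (W : Fin k → Fin d → ℝ) :
    HasFDerivAt (trainLoss k d m x y)
      ((1 / (m : ℝ)) • ∑ i : Fin m, (Z x y W i)⁻¹ •
        ∑ y' : Fin k, Real.exp (A x y W i y') • Bclm x y i y') W := by
  have hA : ∀ (i : Fin m) (y' : Fin k),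
      HasFDerivAt (fun V => A x y V i y') (Bclm x y i y') W := by
    intro i y'
    have h := ((Bclm x y i y').hasFDerivAt (x := W)).const_add
      (if y' ≠ y i then (1 : ℝ) else 0)
    exact h
  have hexp : ∀ (i : Fin m) (y' : Fin k),
      HasFDerivAt (fun V => Real.exp (A x y V i y'))
        (Real.exp (A x y W i y') • Bclm x y i y') W := by
    intro i y'
    exact (Real.hasDerivAt_exp (A x y W i y')).comp_hasFDerivAt W (hA i y')
  have hZ : ∀ i : Fin m, HasFDerivAt (fun V => Z x y V i)
      (∑ y' : Fin k, Real.exp (A x y W i y') • Bclm x y i y') W := by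
    intro i
    exact HasFDerivAt.fun_sum fun y' _ => hexp i y'
  have hlog : ∀ i : Fin m, HasFDerivAt (fun V => Real.log (Z x y V i))
      ((Z x y W i)⁻¹ • ∑ y' : Fin k, Real.exp (A x y W i y') • Bclm x y i y') W := by
    intro i
    exact (Real.hasDerivAt_log (Z_pos hk W i).ne').comp_hasFDerivAt W (hZ i)
  have hsum := HasFDerivAt.fun_sum fun (i : Fin m) (_ : i ∈ Finset.univ) => hlog i
  have h := hsum.const_mul (1 / (m : ℝ))
  have hfun : (trainLoss k d m x y)
      = fun V => (1 / (m : ℝ)) * ∑ i : Fin m, Real.log (Z x y V i) :=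
    funext fun V => trainLoss_eq x y V
  rw [hfun]
  exact h

variable (x y) in
/-- matrix basis element. -/
def Eb (q : Fin k) (r : Fin d) : Fin k → Fin d → ℝ :=
  fun q' j' => if q' = q ∧ j' = r then (1 : ℝ) else 0

lemma gradCol_eq (hk : 0 < k) (W : Fin k → Fin d → ℝ) (r : Fin d) (q : Fin k) :
    gradCol k d (trainLoss k d m x y) W r q = lam x y W (Eb q r) := by
  unfold gradCol
  rw [(hasFDerivAt_trainLoss hk W).fderiv]
  have hEb : (fun q' j' => if q' = q ∧ j' = r then (1 : ℝ) else 0) = Eb q r := rfl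
  rw [hEb]
  simp only [ContinuousLinearMap.smul_apply, ContinuousLinearMap.coe_sum',
    Finset.sum_apply, Bclm_apply, smul_eq_mul]
  unfold lam
  congr 1
  refine Finset.sum_congr rfl fun i _ => ?_
  rw [sum_p_mul _ i, div_eq_inv_mul, Finset.mul_sum]

lemma B_add (U V : Fin k → Fin d → ℝ) (i : Fin m) (y' : Fin k) :
    B x y (U + V) i y' = B x y U i y' + B x y V i y' := by
  unfold B
  simp only [Pi.add_apply, add_mul, Finset.sum_add_distrib]
  ring

lemma B_smul (c : ℝ) (U : Fin k → Fin d → ℝ) (i : Fin m) (y' : Fin k) :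
    B x y (c • U) i y' = c * B x y U i y' := by
  unfold B
  simp only [Pi.smul_apply, smul_eq_mul, mul_assoc, ← Finset.mul_sum]
  ring

variable (x y) in
/-- `lam` as a linear map in its second argument. -/
def lamL (W : Fin k → Fin d → ℝ) : (Fin k → Fin d → ℝ) →ₗ[ℝ] ℝ where
  toFun := fun U => lam x y W U
  map_add' := by
    intro U V
    unfold lam
    simp only [B_add, mul_add, Finset.sum_add_distrib]
  map_smul' := by
    intro c U
    unfold lam
    simp only [RingHom.id_apply, smul_eq_mul]
    have hin : ∀ i : Fin m, (∑ y' : Fin k, p x y W i y' * B x y (c • U) i y')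
        = c * ∑ y' : Fin k, p x y W i y' * B x y U i y' := by
      intro i
      rw [Finset.mul_sum]
      exact Finset.sum_congr rfl fun y' _ => by rw [B_smul]; ring
    simp only [hin]
    rw [← Finset.mul_sum]
    ring

@[simp] lemma lamL_apply (W U : Fin k → Fin d → ℝ) : lamL x y W U = lam x y W U := rfl

lemma matrix_decomp (U : Fin k → Fin d → ℝ) :
    U = ∑ q : Fin k, ∑ r : Fin d, U q r • Eb q r := by
  funext q' j'
  simp only [Finset.sum_apply, Pi.smul_apply, Eb, smul_eq_mul]
  have hinner : ∀ q : Fin k, (∑ r : Fin d, U q r * if q' = q ∧ j' = r then (1:ℝ) else 0)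
      = if q' = q then U q j' else 0 := by
    intro q
    rcases eq_or_ne q' q with h | h
    · subst h
      simp only [true_and, if_true, mul_ite, mul_one, mul_zero]
      rw [Finset.sum_ite_eq Finset.univ j' (fun r => U q' r)]
      simp
    · simp [h, Ne.symm]
  simp only [hinner]
  rw [Finset.sum_ite_eq Finset.univ q' (fun q => U q j')]
  simp

lemma lam_decomp (W U : Fin k → Fin d → ℝ) :
    lam x y W U = ∑ q : Fin k, ∑ r : Fin d, U q r * lam x y W (Eb q r) := by
  conv_lhs => rw [← lamL_apply, matrix_decomp U]
  rw [map_sum]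
  refine Finset.sum_congr rfl fun q _ => ?_
  rw [map_sum]
  refine Finset.sum_congr rfl fun r _ => ?_
  rw [LinearMap.map_smul, smul_eq_mul, lamL_apply]

/-- first-order optimality: the directional derivative vanishes at a constrained minimizer
along feasible directions. -/
lemma lam_eq_zero_of_min (hk : 0 < k) {Ft : Finset (Fin d)} {Wt : Fin k → Fin d → ℝ}
    (hsupp : ∀ i ∉ Ft, ∀ q, Wt q i = 0)
    (hmin : ∀ V : Fin k → Fin d → ℝ, (∀ i ∉ Ft, ∀ q, V q i = 0) →
      trainLoss k d m x y Wt ≤ trainLoss k d m x y V)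
    (V : Fin k → Fin d → ℝ) (hV : ∀ i ∉ Ft, ∀ q, V q i = 0) :
    lam x y Wt V = 0 := by
  have hd : HasDerivAt (fun s => trainLoss k d m x y (Wadd Wt s V)) (lam x y Wt V) 0 := by
    have h := hasDerivAt_trainLoss (x := x) (y := y) hk Wt V 0
    rwa [Wadd_zero] at h
  have hlm : IsLocalMin (fun s => trainLoss k d m x y (Wadd Wt s V)) 0 := by
    refine Filter.Eventually.of_forall fun s => ?_
    dsimp only
    rw [Wadd_zero]
    refine hmin (Wadd Wt s V) fun i hi q => ?_
    unfold Wadd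
    rw [hsupp i hi q, hV i hi q]
    ring
  exact hlm.hasDerivAt_eq_zero hd

end SB

lemma key_base {A A' G R : ℝ} (hG : 0 ≤ G)
    (hAG : A ≤ R * G) (hd : A' ≤ A - G ^ 2 / 2) : A' ≤ 2 * R ^ 2 := by
  nlinarith [sq_nonneg (R - G), sq_nonneg R]

lemma key_step {A A' G R t : ℝ} (hR : 0 < R) (ht : 1 ≤ t) (hA : 0 < A) (hG : 0 ≤ G)
    (hAG : A ≤ R * G) (hAt : A * t ≤ 2 * R ^ 2) (hd : A' ≤ A - G ^ 2 / 2) :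
    A' * (t + 1) ≤ 2 * R ^ 2 := by
  have ht1 : (0:ℝ) ≤ t + 1 := by linarith
  have hM2 : (0:ℝ) < 2 * R ^ 2 := by positivity
  have h1 : 0 ≤ R ^ 2 * G ^ 2 - A ^ 2 := by nlinarith [mul_nonneg hR.le hG]
  have H1 : 0 ≤ 2 * R ^ 2 * ((A - G ^ 2 / 2 - A') * (t + 1)) :=
    mul_nonneg hM2.le (mul_nonneg (by linarith) ht1)
  have H2 : 0 ≤ (R ^ 2 * G ^ 2 - A ^ 2) * (t + 1) := mul_nonneg h1 ht1
  have H3 : 0 ≤ (2 * R ^ 2 - A * t) ^ 2 := sq_nonneg _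
  have H4 : 0 ≤ A * (t - 1) * (2 * R ^ 2 - A * t) :=
    mul_nonneg (mul_nonneg hA.le (by linarith)) (by linarith)
  nlinarith [H1, H2, H3, H4, sq_nonneg A, hM2]


open SB

/-- **Corollary 1.** If there is a matrix `W★` with loss at most `ε`, entries in `[-c, c]`,
and exactly `r` nonzero columns, then after `T = ⌈4 r² c² / ε⌉` iterations ShareBoost
outputs a matrix with loss at most `2ε` and at most `T ≤ ⌈4 r² c² / ε⌉` nonzero columns. -/
theorem shareBoost_shared_features_corollary
    (k d m : ℕ) (hk : 2 ≤ k) (hd : 1 ≤ d) (hm : 1 ≤ m)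
    (x : Fin m → Fin d → ℝ) (y : Fin m → Fin k)
    (hx : ∀ i : Fin m, ‖x i‖ ≤ 1)
    (F : ℕ → Finset (Fin d)) (W : ℕ → Fin k → Fin d → ℝ) (jj : ℕ → Fin d)
    (hSB : ShareBoostSeq k d m x y F W jj)
    (ε c : ℝ) (hε : 0 < ε) (hc : 0 < c)
    (Wstar : Fin k → Fin d → ℝ)
    (hWstarLoss : trainLoss k d m x y Wstar ≤ ε)
    (hWstarEntries : ∀ q i, Wstar q i ∈ Set.Icc (-c) c)
    (r : ℕ) (hWstarCols : {i : Fin d | ∃ q, Wstar q i ≠ 0}.ncard = r)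
    (T : ℕ) (hT : T = ⌈4 * (r : ℝ) ^ 2 * c ^ 2 / ε⌉₊) :
    trainLoss k d m x y (W T) ≤ 2 * ε ∧
      {i : Fin d | ∃ q, W T q i ≠ 0}.ncard ≤ T ∧ T ≤ ⌈4 * (r : ℝ) ^ 2 * c ^ 2 / ε⌉₊ := by
  classical
  have hk0 : 0 < k := lt_of_lt_of_le two_pos hk
  have hx' : ∀ (i : Fin m) (j : Fin d), |x i j| ≤ 1 := by
    intro i j
    calc |x i j| = ‖x i j‖ := (Real.norm_eq_abs _).symm
      _ ≤ ‖x i‖ := norm_le_pi_norm (x i) j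
      _ ≤ 1 := hx i
  -- notation
  set Lf : ℕ → ℝ := fun t => trainLoss k d m x y (W t) with hLf
  set G : ℕ → ℝ := fun t =>
    ∑ q : Fin k, |gradCol k d (trainLoss k d m x y) (W t) (jj t) q| with hGf
  have hGnonneg : ∀ t, 0 ≤ G t := fun t => Finset.sum_nonneg fun q _ => abs_nonneg _
  -- the nonzero columns of Wstar
  set N : Finset (Fin d) := Finset.univ.filter (fun i => ∃ q, Wstar q i ≠ 0) with hN
  have hNcard : N.card = r := by
    rw [← hWstarCols]
    have : {i : Fin d | ∃ q, Wstar q i ≠ 0} = ↑N := by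
      ext i; simp [hN]
    rw [this, Set.ncard_coe_finset]
  -- optimality: lam vanishes on feasible directions
  have hopt : ∀ t, lam x y (W t) (W t) = 0 := fun t =>
    lam_eq_zero_of_min hk0 (hSB.W_supp t) (hSB.W_min t) (W t) (hSB.W_supp t)
  -- (h1):  L t - ε ≤ (r c) G t
  have h1 : ∀ t, Lf t - ε ≤ ((r : ℝ) * c) * G t := by
    intro t
    set U : Fin k → Fin d → ℝ := Wstar - W t with hU
    have hW1 : trainLoss k d m x y (Wadd (W t) 1 U) = trainLoss k d m x y Wstar := by
      congr 1
      funext q j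
      simp only [Wadd, hU, Pi.sub_apply]
      ring
    have hconv := convexity_ineq (x := x) (y := y) hk0 (W t) U
    rw [hW1] at hconv
    have hlamU : lam x y (W t) U = lam x y (W t) Wstar := by
      have := (lamL x y (W t)).map_sub Wstar (W t)
      simp only [lamL_apply] at this
      rw [hU, this, hopt t, sub_zero]
    have hkey : Lf t - ε ≤ - lam x y (W t) Wstar := by
      have : Lf t + lam x y (W t) Wstar ≤ ε := by
        rw [← hlamU]
        exact le_trans hconv hWstarLoss
      linarith
    have habs : - lam x y (W t) Wstar ≤ ((r : ℝ) * c) * G t := by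
      rw [lam_decomp]
      have hb1 : - (∑ q : Fin k, ∑ jr : Fin d, Wstar q jr * lam x y (W t) (Eb q jr))
          ≤ ∑ q : Fin k, ∑ jr : Fin d, |Wstar q jr| * |lam x y (W t) (Eb q jr)| := by
        refine le_trans (neg_le_abs _) ?_
        refine le_trans (Finset.abs_sum_le_sum_abs _ _) ?_
        refine Finset.sum_le_sum fun q _ => ?_
        refine le_trans (Finset.abs_sum_le_sum_abs _ _) ?_
        exact Finset.sum_le_sum fun jr _ => le_of_eq (abs_mul _ _)
      refine le_trans hb1 ?_
      rw [Finset.sum_comm]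
      have hz : ∀ jr ∉ N,
          (∑ q : Fin k, |Wstar q jr| * |lam x y (W t) (Eb q jr)|) = 0 := by
        intro jr hjr
        simp only [hN, Finset.mem_filter, Finset.mem_univ, true_and, not_exists,
          not_not] at hjr
        refine Finset.sum_eq_zero fun q _ => ?_
        rw [hjr q, abs_zero, zero_mul]
      rw [← Finset.sum_subset (Finset.subset_univ N) (fun jr _ hjr => hz jr hjr)]
      have hbd : ∀ jr ∈ N,
          (∑ q : Fin k, |Wstar q jr| * |lam x y (W t) (Eb q jr)|) ≤ c * G t := by
        intro jr _
        have step1 : (∑ q : Fin k, |Wstar q jr| * |lam x y (W t) (Eb q jr)|)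
            ≤ ∑ q : Fin k, c * |lam x y (W t) (Eb q jr)| := by
          refine Finset.sum_le_sum fun q _ => ?_
          refine mul_le_mul_of_nonneg_right ?_ (abs_nonneg _)
          have h := hWstarEntries q jr
          rw [Set.mem_Icc] at h
          exact abs_le.mpr h
        refine le_trans step1 ?_
        rw [← Finset.mul_sum]
        refine mul_le_mul_of_nonneg_left ?_ hc.le
        have hj := hSB.j_max t jr
        have hEq : ∀ (rr : Fin d) (q : Fin k),
            gradCol k d (trainLoss k d m x y) (W t) rr q = lam x y (W t) (Eb q rr) :=
          fun rr q => gradCol_eq hk0 (W t) rr q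
        calc (∑ q : Fin k, |lam x y (W t) (Eb q jr)|)
            = ∑ q : Fin k, |gradCol k d (trainLoss k d m x y) (W t) jr q| := by
              refine Finset.sum_congr rfl fun q _ => ?_
              rw [hEq]
          _ ≤ G t := hj
      calc (∑ jr ∈ N, ∑ q : Fin k, |Wstar q jr| * |lam x y (W t) (Eb q jr)|)
          ≤ ∑ _jr ∈ N, c * G t := Finset.sum_le_sum hbd
        _ = (N.card : ℝ) * (c * G t) := by rw [Finset.sum_const, nsmul_eq_mul]
        _ = ((r : ℝ) * c) * G t := by rw [hNcard]; ring
    exact le_trans hkey habs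
  -- (h2): descent
  have h2 : ∀ t, Lf (t + 1) ≤ Lf t - (G t) ^ 2 / 2 := by
    intro t
    set g : Fin k → ℝ := fun q => gradCol k d (trainLoss k d m x y) (W t) (jj t) q with hg
    set σ : Fin k → ℝ := fun q => if 0 ≤ g q then (-1 : ℝ) else 1 with hσ
    set U : Fin k → Fin d → ℝ := fun q i => if i = jj t then σ q else 0 with hU
    have hU0 : ∀ (q : Fin k) (i : Fin d), i ≠ jj t → U q i = 0 := by
      intro q i hi; simp [hU, hi]
    have hU1 : ∀ q : Fin k, |U q (jj t)| ≤ 1 := by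
      intro q
      simp only [hU, if_pos rfl, hσ]
      split <;> simp
    have hlamU : lam x y (W t) U = - G t := by
      rw [lam_decomp]
      have hrow : ∀ q : Fin k,
          (∑ jr : Fin d, U q jr * lam x y (W t) (Eb q jr)) = - |g q| := by
        intro q
        rw [Finset.sum_eq_single (jj t)]
        · have hEq : lam x y (W t) (Eb q (jj t)) = g q := (gradCol_eq hk0 (W t) (jj t) q).symm
          rw [hEq]
          simp only [hU, if_pos rfl, hσ]
          rcases le_or_gt 0 (g q) with h | h
          · rw [if_pos h, abs_of_nonneg h]; ring
          · rw [if_neg (not_le.mpr h), abs_of_neg h]; ring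
        · intro b _ hb
          rw [hU0 q b hb, zero_mul]
        · intro hmem; exact absurd (Finset.mem_univ (jj t)) hmem
      simp only [hrow]
      have hGt : G t = ∑ q : Fin k, |g q| := by rw [hGf, hg]
      rw [hGt, Finset.sum_neg_distrib]
    have hdesc := descent_ineq (x := x) (y := y) hk0 hx' (W t) U (jj t) hU0 hU1 (hGnonneg t)
    rw [hlamU] at hdesc
    have hmin := hSB.W_min (t + 1) (Wadd (W t) (G t) U) ?feas
    case feas =>
      intro i hi q
      rw [hSB.F_succ t, Finset.mem_insert] at hi
      push_neg at hi
      simp only [Wadd]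
      rw [hSB.W_supp t i hi.2 q, hU0 q i hi.1]
      ring
    calc Lf (t + 1) ≤ trainLoss k d m x y (Wadd (W t) (G t) U) := hmin
      _ ≤ Lf t + G t * (- G t) + (G t) ^ 2 / 2 := hdesc
      _ = Lf t - (G t) ^ 2 / 2 := by ring
  -- support bound
  have hFcard : ∀ t, (F t).card ≤ t := by
    intro t
    induction t with
    | zero => rw [hSB.F_zero]; simp
    | succ n ih =>
        rw [hSB.F_succ n]
        calc (insert (jj n) (F n)).card ≤ (F n).card + 1 := Finset.card_insert_le _ _
          _ ≤ n + 1 := by omega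
    
  have hsupp : {i : Fin d | ∃ q, W T q i ≠ 0}.ncard ≤ T := by
    have hsub : {i : Fin d | ∃ q, W T q i ≠ 0} ⊆ ↑(F T) := by
      intro i hi
      simp only [Set.mem_setOf_eq] at hi
      obtain ⟨q, hq⟩ := hi
      by_contra hmem
      exact hq (hSB.W_supp T i (by simpa using hmem) q)
    calc {i : Fin d | ∃ q, W T q i ≠ 0}.ncard ≤ (↑(F T) : Set (Fin d)).ncard :=
          Set.ncard_le_ncard hsub (F T).finite_toSet
      _ = (F T).card := Set.ncard_coe_finset _
      _ ≤ T := hFcard T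
  refine ⟨?_, hsupp, le_of_eq hT⟩
  -- main loss bound
  rcases Nat.eq_zero_or_pos r with hr0 | hrpos
  · -- r = 0 : loss is always at most ε
    have := h1 T
    rw [hr0] at this
    simp only [Nat.cast_zero, zero_mul] at this
    linarith
  · -- r ≥ 1
    have hrc : 0 < (r : ℝ) * c := mul_pos (by exact_mod_cast hrpos) hc
    set M : ℝ := 2 * ((r : ℝ) * c) ^ 2 with hM
    have hMpos : 0 < M := by positivity
    have key : ∀ t : ℕ, 1 ≤ t → (Lf t - ε) * t ≤ M := by
      intro t ht
      induction t with
      | zero => omega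
      | succ n ih =>
          rcases Nat.eq_zero_or_pos n with hn0 | hnpos
          · subst hn0
            have hd0 := h2 0
            norm_num at hd0 ⊢
            rw [hM]
            linarith [key_base (A := Lf 0 - ε) (A' := Lf 1 - ε) (G := G 0)
              (R := (r : ℝ) * c) (hGnonneg 0) (h1 0) (by linarith : Lf 1 - ε ≤ (Lf 0 - ε) - G 0 ^ 2 / 2)]
          · have ihn := ih hnpos
            have hdn := h2 n
            have hgn := h1 n
            have hGn := hGnonneg n
            have hncast : (1 : ℝ) ≤ (n : ℝ) := by exact_mod_cast hnpos
            rcases le_or_gt (Lf n - ε) 0 with hneg | hposA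
            · have hA' : Lf (n + 1) - ε ≤ 0 := by
                have := sq_nonneg (G n); linarith
              have hn1 : (0:ℝ) ≤ (n : ℝ) + 1 := by linarith
              push_cast
              nlinarith [mul_nonneg (neg_nonneg.mpr hA') hn1, hMpos]
            · have hAt : (Lf n - ε) * (n : ℝ) ≤ 2 * ((r : ℝ) * c) ^ 2 := by
                rw [hM] at ihn; exact ihn
              have hs := key_step (A := Lf n - ε) (A' := Lf (n + 1) - ε) (G := G n)
                (R := (r : ℝ) * c) (t := (n : ℝ)) hrc hncast hposA hGn hgn hAt
                (by linarith)
              push_cast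
              rw [hM]
              exact hs
    -- conclude
    have hT1 : 1 ≤ T := by
      rw [hT]
      have hpos : 0 < 4 * (r : ℝ) ^ 2 * c ^ 2 / ε := by positivity
      exact Nat.one_le_iff_ne_zero.mpr (by
        intro h0
        rw [Nat.ceil_eq_zero] at h0
        linarith)
    have hTge : 2 * M / ε ≤ (T : ℝ) := by
      rw [hT]
      have h4 : 4 * (r : ℝ) ^ 2 * c ^ 2 / ε = 2 * M / ε := by rw [hM]; ring
      rw [← h4]
      exact Nat.le_ceil _
    have hkeyT := key T hT1
    have hTpos : (0 : ℝ) < (T : ℝ) := by exact_mod_cast hT1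
    rcases le_or_gt (Lf T - ε) 0 with h | h
    · linarith
    · have h5 : (Lf T - ε) * (2 * M / ε) ≤ (Lf T - ε) * T :=
        mul_le_mul_of_nonneg_left hTge h.le
      have h6 : (Lf T - ε) * (2 * M / ε) ≤ M := le_trans h5 hkeyT
      have h9 : (Lf T - ε) * (2 * M) ≤ M * ε := by
        have h10 := mul_le_mul_of_nonneg_right h6 hε.le
        have h11 : (Lf T - ε) * (2 * M / ε) * ε = (Lf T - ε) * (2 * M) := by
          field_simp
        rw [h11] at h10
        exact h10
      nlinarith [h9, mul_pos hMpos hε]
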